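/- For the perturbed walk with α > 1, for every a > 0 and r > 0, P_{(0,a)}(ρ > m) ≤ m^{−r} for all sufficiently large m; that is, the exit time from the axes has tails decaying faster than any polynomial. -/
import Mathlib


open MeasureTheory Filter Asymptotics
open scoped Classical ENNReal

noncomputable section

/-- The four open cones: both coordinates nonzero. -/
def coneK : Set (ℤ × ℤ) := {z | z.1 ≠ 0 ∧ z.2 ≠ 0}

/-- The axes (complement of the cones). -/
def axesKc : Set (ℤ × ℤ) := {z | z.1 = 0 ∨ z.2 = 0}

/-- Nearest-neighbour adjacency on `ℤ²`. -/
def adj (z w : ℤ × ℤ) : Prop := (w.1 - z.1).natAbs + (w.2 - z.2).natAbs = 1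

/-- Maximum norm on `ℤ²`. -/
def onorm (z : ℤ × ℤ) : ℕ := max z.1.natAbs z.2.natAbs

/-- Transition probabilities of the perturbed walk: simple random walk on the cones and
at the origin; on the axes, at distance `i > 0` from the origin, probability `1/(4 i^α)`
to step outward or sideways and `1 - 3/(4 i^α)` to step toward the origin. -/
noncomputable def q (α : ℝ) (z w : ℤ × ℤ) : ℝ :=
  if z.2 = 0 ∧ z.1 ≠ 0 then
    (if w = (z.1 + Int.sign z.1, 0) ∨ w = (z.1, 1) ∨ w = (z.1, -1) then
      1 / (4 * (z.1.natAbs : ℝ) ^ α)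
    else if w = (z.1 - Int.sign z.1, 0) then
      1 - 3 / (4 * (z.1.natAbs : ℝ) ^ α)
    else 0)
  else if z.1 = 0 ∧ z.2 ≠ 0 then
    (if w = (0, z.2 + Int.sign z.2) ∨ w = (1, z.2) ∨ w = (-1, z.2) then
      1 / (4 * (z.2.natAbs : ℝ) ^ α)
    else if w = (0, z.2 - Int.sign z.2) then
      1 - 3 / (4 * (z.2.natAbs : ℝ) ^ α)
    else 0)
  else (if adj z w then 1 / 4 else 0)

/-- A Markov chain on `ℤ²` with transition kernel `q α`: a family of probability
measures `P x` (the chain started at `x`) whose finite-dimensional distributions are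
products of the transition probabilities. -/
structure PerturbedWalk (α : ℝ) (Ω : Type*) [MeasurableSpace Ω] where
  X : ℕ → Ω → ℤ × ℤ
  P : ℤ × ℤ → Measure Ω
  meas : ∀ n, Measurable (X n)
  prob : ∀ x, IsProbabilityMeasure (P x)
  fdd : ∀ (x : ℤ × ℤ) (n : ℕ) (path : ℕ → ℤ × ℤ), path 0 = x →
    (P x {ω | ∀ i ≤ n, X i ω = path i}).toReal
      = ∏ i ∈ Finset.range n, q α (path i) (path (i + 1))

/-- `n` is the first time (after `0`) at which the walk is in the cones `K`;
i.e. `ρ = n` where `ρ` is the entrance time into `K`. -/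
def entersConeAt {Ω : Type*} (X : ℕ → Ω → ℤ × ℤ) (n : ℕ) (ω : Ω) : Prop :=
  0 < n ∧ X n ω ∈ coneK ∧ ∀ m, 0 < m → m < n → X m ω ∉ coneK

/-- `n` is the first time (after `0`) at which the walk is on the axes `K^c`;
i.e. `η = n` where `η` is the entrance time into `K^c`. -/
def entersAxesAt {Ω : Type*} (X : ℕ → Ω → ℤ × ℤ) (n : ℕ) (ω : Ω) : Prop :=
  0 < n ∧ X n ω ∈ axesKc ∧ ∀ m, 0 < m → m < n → X m ω ∉ axesKc

/-- Lyapunov function. -/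
noncomputable def lyap (z : ℤ × ℤ) : ℝ := if z = (0,0) then 3 else 2 ^ onorm z

lemma lyap_one_le (z : ℤ × ℤ) : 1 ≤ lyap z := by
  unfold lyap; split
  · norm_num
  · exact one_le_pow₀ (by norm_num : (1:ℝ) ≤ 2)

lemma lyap_nonneg (z : ℤ × ℤ) : 0 ≤ lyap z := le_trans zero_le_one (lyap_one_le z)

lemma rpow_natAbs_one_le {α : ℝ} (hα : 0 ≤ α) {b : ℤ} (hb : b ≠ 0) :
    1 ≤ ((b.natAbs : ℝ)) ^ α := by
  apply Real.one_le_rpow _ hα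
  have : 1 ≤ b.natAbs := by omega
  exact_mod_cast this


lemma three_div_le_one {α : ℝ} (hα : 0 ≤ α) {b : ℤ} (hb : b ≠ 0) :
    3 / (4 * ((b.natAbs : ℝ)) ^ α) ≤ 1 := by
  have h := rpow_natAbs_one_le hα hb
  rw [div_le_one (by linarith)]; linarith

lemma q_nonneg {α : ℝ} (hα : 0 ≤ α) (z w : ℤ × ℤ) : 0 ≤ q α z w := by
  unfold q
  split_ifs with h1 h2 h3 h4 h5 h6 h7
  · positivity
  · linarith [three_div_le_one hα h1.2]
  · exact le_refl _
  · positivity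
  · linarith [three_div_le_one hα h4.2]
  · exact le_refl _
  · norm_num
  · exact le_refl _

lemma sum_le_of_support {Y S : Finset (ℤ × ℤ)} {t : ℤ × ℤ → ℝ}
    (h0 : ∀ y ∈ Y, y ∉ S → t y = 0) (hnn : ∀ y ∈ S, 0 ≤ t y) :
    ∑ y ∈ Y, t y ≤ ∑ y ∈ S, t y := by
  have h1 : ∑ y ∈ Y, t y = ∑ y ∈ Y.filter (· ∈ S), t y := by
    refine (Finset.sum_filter_of_ne ?_).symm
    intro y hy hne
    by_contra h
    exact hne (h0 y hy h)
  rw [h1]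
  refine Finset.sum_le_sum_of_subset_of_nonneg ?_ (fun y hy _ => hnn y hy)
  intro y hy
  exact (Finset.mem_filter.1 hy).2

lemma natAbs_add_sign {b : ℤ} (hb : b ≠ 0) : (b + b.sign).natAbs = b.natAbs + 1 := by
  rcases lt_trichotomy b 0 with h | h | h
  · rw [Int.sign_eq_neg_one_of_neg h]; omega
  · exact absurd h hb
  · rw [Int.sign_eq_one_of_pos h]; omega

lemma natAbs_sub_sign {b : ℤ} (hb : b ≠ 0) : (b - b.sign).natAbs = b.natAbs - 1 := by
  rcases lt_trichotomy b 0 with h | h | h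
  · rw [Int.sign_eq_neg_one_of_neg h]; omega
  · exact absurd h hb
  · rw [Int.sign_eq_one_of_pos h]; omega

lemma axis_bound {α : ℝ} (hα : 0 ≤ α) {n : ℕ} (hn : 1 ≤ n) (g : ℝ)
    (hg : g = if n = 1 then (3:ℝ) else 2 ^ (n - 1)) :
    1 / (4 * (n:ℝ) ^ α) * 2 ^ (n + 1) + (1 - 3 / (4 * (n:ℝ) ^ α)) * g
      ≤ 7 / 8 * 2 ^ n := by
  have ht : (1:ℝ) ≤ (n:ℝ) ^ α := Real.one_le_rpow (by exact_mod_cast hn) hα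
  have hc : 1 / (4 * (n:ℝ) ^ α) ≤ 1 / 4 := by
    rw [div_le_div_iff₀ (by linarith) (by norm_num)]; linarith
  have hc0 : 0 ≤ 1 / (4 * (n:ℝ) ^ α) := by positivity
  rcases eq_or_lt_of_le hn with h1 | h1
  · have hn1 : n = 1 := h1.symm
    subst hn1
    simp only [Nat.cast_one, Real.one_rpow] at *
    subst hg
    norm_num
  · have hn2 : 2 ≤ n := h1
    obtain ⟨k, rfl⟩ : ∃ k, n = k + 2 := ⟨n - 2, by omega⟩
    simp only [show ¬(k + 2 = 1) by omega, if_false] at hg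
    subst hg
    have e1 : (2:ℝ) ^ (k + 2 + 1) = 4 * 2 ^ (k + 1) := by ring
    have e2 : (2:ℝ) ^ (k + 2) = 2 * 2 ^ (k + 1) := by ring
    have e3 : k + 2 - 1 = k + 1 := by omega
    rw [e1, e2, e3]
    have hA : (0:ℝ) < 2 ^ (k + 1) := by positivity
    have key : 1 / (4 * ((k+2:ℕ):ℝ) ^ α) * (4 * 2 ^ (k+1))
        + (1 - 3 / (4 * ((k+2:ℕ):ℝ) ^ α)) * 2 ^ (k+1)
        = 2 ^ (k+1) + (1 / (4 * ((k+2:ℕ):ℝ) ^ α)) * 2 ^ (k+1) := by ring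
    rw [key]
    nlinarith [mul_le_mul_of_nonneg_right hc (le_of_lt hA)]


lemma lyap_of_ne {z : ℤ × ℤ} (h : z ≠ (0,0)) : lyap z = 2 ^ onorm z := by
  unfold lyap; rw [if_neg h]

lemma isign_ne_zero {b : ℤ} (hb : b ≠ 0) : b.sign ≠ 0 :=
  fun h => hb (Int.sign_eq_zero_iff_zero.1 h)

lemma drift_xaxis {α : ℝ} (hα : 0 ≤ α) {x1 : ℤ} (h1 : x1 ≠ 0)
    {Y : Finset (ℤ × ℤ)} (hY : ∀ y ∈ Y, y ∈ axesKc) :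
    ∑ y ∈ Y, q α (x1, 0) y * lyap y ≤ 7 / 8 * lyap (x1, 0) := by
  have hs : x1.sign ≠ 0 := isign_ne_zero h1
  set n := x1.natAbs with hn_def
  have hn : 1 ≤ n := by omega
  have hup : (x1 + x1.sign).natAbs = n + 1 := natAbs_add_sign h1
  have hdown : (x1 - x1.sign).natAbs = n - 1 := natAbs_sub_sign h1
  set up : ℤ × ℤ := (x1 + x1.sign, 0) with hup_def
  set down : ℤ × ℤ := (x1 - x1.sign, 0) with hdown_def
  have hud : up ≠ down := by
    simp only [hup_def, hdown_def, Prod.mk.injEq, ne_eq]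
    intro h
    have : x1.sign = 0 := by linarith [h.1]
    exact hs this
  have key : ∑ y ∈ Y, q α (x1, 0) y * lyap y
      ≤ ∑ y ∈ ({up, down} : Finset (ℤ × ℤ)), q α (x1, 0) y * lyap y := by
    apply sum_le_of_support
    · intro y hy hne
      have hy1 : y ≠ up := fun h => hne (by simp [h])
      have hy2 : y ≠ down := fun h => hne (by simp [h])
      have hax := hY y hy
      simp only [axesKc, Set.mem_setOf_eq] at hax
      unfold q
      rw [if_pos (⟨rfl, h1⟩ : (x1, (0:ℤ)).2 = 0 ∧ (x1, (0:ℤ)).1 ≠ 0)]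
      rw [if_neg, if_neg, zero_mul]
      · exact hy2
      · rintro (h | h | h)
        · exact hy1 h
        · subst h; rcases hax with h' | h'
          · exact h1 h'
          · norm_num at h'
        · subst h; rcases hax with h' | h'
          · exact h1 h'
          · norm_num at h'
    · intro y _; exact mul_nonneg (q_nonneg hα _ _) (lyap_nonneg _)
  refine key.trans ?_
  rw [Finset.sum_pair hud]
  have hq_up : q α (x1, 0) up = 1 / (4 * (n:ℝ) ^ α) := by
    unfold q
    rw [if_pos (⟨rfl, h1⟩ : (x1, (0:ℤ)).2 = 0 ∧ (x1, (0:ℤ)).1 ≠ 0), if_pos (Or.inl rfl)]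
  have hq_down : q α (x1, 0) down = 1 - 3 / (4 * (n:ℝ) ^ α) := by
    unfold q
    rw [if_pos (⟨rfl, h1⟩ : (x1, (0:ℤ)).2 = 0 ∧ (x1, (0:ℤ)).1 ≠ 0), if_neg, if_pos rfl]
    rintro (h | h | h)
    · simp only [hdown_def, hup_def, Prod.mk.injEq] at h
      have : x1.sign = 0 := by linarith [h.1]
      exact hs this
    · simp only [hdown_def, Prod.mk.injEq] at h
      exact absurd h.2 (by norm_num)
    · simp only [hdown_def, Prod.mk.injEq] at h
      exact absurd h.2 (by norm_num)
  have hlyap_up : lyap up = 2 ^ (n + 1) := by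
    rw [lyap_of_ne, hup_def]
    · unfold onorm
      simp [hup]
    · simp only [hup_def, Prod.mk.injEq, ne_eq]
      intro h
      rw [h.1] at hup
      simp at hup
  have hlyap_x : lyap (x1, 0) = 2 ^ n := by
    rw [lyap_of_ne]
    · unfold onorm; simp [hn_def]
    · simp only [Prod.mk.injEq, ne_eq]
      intro h; exact h1 h.1
  have hlyap_down : lyap down = if n = 1 then (3:ℝ) else 2 ^ (n - 1) := by
    by_cases hone : n = 1
    · have : x1 - x1.sign = 0 := by omega
      rw [if_pos hone, hdown_def, this]
      unfold lyap
      rw [if_pos rfl]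
    · rw [if_neg hone, lyap_of_ne, hdown_def]
      · unfold onorm; simp [hdown]
      · simp only [hdown_def, Prod.mk.injEq, ne_eq]
        intro h
        rw [h.1] at hdown
        simp at hdown
        omega
  rw [hq_up, hq_down, hlyap_up, hlyap_down, hlyap_x]
  exact axis_bound hα hn _ rfl

lemma drift_yaxis {α : ℝ} (hα : 0 ≤ α) {x2 : ℤ} (h2 : x2 ≠ 0)
    {Y : Finset (ℤ × ℤ)} (hY : ∀ y ∈ Y, y ∈ axesKc) :
    ∑ y ∈ Y, q α (0, x2) y * lyap y ≤ 7 / 8 * lyap (0, x2) := by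
  have hs : x2.sign ≠ 0 := isign_ne_zero h2
  set n := x2.natAbs with hn_def
  have hn : 1 ≤ n := by omega
  have hup : (x2 + x2.sign).natAbs = n + 1 := natAbs_add_sign h2
  have hdown : (x2 - x2.sign).natAbs = n - 1 := natAbs_sub_sign h2
  set up : ℤ × ℤ := (0, x2 + x2.sign) with hup_def
  set down : ℤ × ℤ := (0, x2 - x2.sign) with hdown_def
  have hud : up ≠ down := by
    simp only [hup_def, hdown_def, Prod.mk.injEq, ne_eq]
    intro h
    have : x2.sign = 0 := by linarith [h.2]
    exact hs this
  have hcond : ¬(((0:ℤ), x2).2 = 0 ∧ ((0:ℤ), x2).1 ≠ 0) := fun h => h.2 rfl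
  have key : ∑ y ∈ Y, q α (0, x2) y * lyap y
      ≤ ∑ y ∈ ({up, down} : Finset (ℤ × ℤ)), q α (0, x2) y * lyap y := by
    apply sum_le_of_support
    · intro y hy hne
      have hy1 : y ≠ up := fun h => hne (by simp [h])
      have hy2 : y ≠ down := fun h => hne (by simp [h])
      have hax := hY y hy
      simp only [axesKc, Set.mem_setOf_eq] at hax
      unfold q
      rw [if_neg hcond]
      rw [if_pos (⟨rfl, h2⟩ : ((0:ℤ), x2).1 = 0 ∧ ((0:ℤ), x2).2 ≠ 0)]
      rw [if_neg, if_neg, zero_mul]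
      · exact hy2
      · rintro (h | h | h)
        · exact hy1 h
        · subst h; rcases hax with h' | h'
          · norm_num at h'
          · exact h2 h'
        · subst h; rcases hax with h' | h'
          · norm_num at h'
          · exact h2 h'
    · intro y _; exact mul_nonneg (q_nonneg hα _ _) (lyap_nonneg _)
  refine key.trans ?_
  rw [Finset.sum_pair hud]
  have hq_up : q α (0, x2) up = 1 / (4 * (n:ℝ) ^ α) := by
    unfold q
    rw [if_neg hcond, if_pos (⟨rfl, h2⟩ : ((0:ℤ), x2).1 = 0 ∧ ((0:ℤ), x2).2 ≠ 0),
      if_pos (Or.inl rfl)]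
  have hq_down : q α (0, x2) down = 1 - 3 / (4 * (n:ℝ) ^ α) := by
    unfold q
    rw [if_neg hcond, if_pos (⟨rfl, h2⟩ : ((0:ℤ), x2).1 = 0 ∧ ((0:ℤ), x2).2 ≠ 0), if_neg,
      if_pos rfl]
    rintro (h | h | h)
    · simp only [hdown_def, hup_def, Prod.mk.injEq] at h
      have : x2.sign = 0 := by linarith [h.2]
      exact hs this
    · simp only [hdown_def, Prod.mk.injEq] at h
      exact absurd h.1 (by norm_num)
    · simp only [hdown_def, Prod.mk.injEq] at h
      exact absurd h.1 (by norm_num)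
  have hlyap_up : lyap up = 2 ^ (n + 1) := by
    rw [lyap_of_ne, hup_def]
    · unfold onorm
      simp [hup]
    · simp only [hup_def, Prod.mk.injEq, ne_eq]
      intro h
      rw [h.2] at hup
      simp at hup
  have hlyap_x : lyap (0, x2) = 2 ^ n := by
    rw [lyap_of_ne]
    · unfold onorm; simp [hn_def]
    · simp only [Prod.mk.injEq, ne_eq]
      intro h; exact h2 h.2
  have hlyap_down : lyap down = if n = 1 then (3:ℝ) else 2 ^ (n - 1) := by
    by_cases hone : n = 1
    · have : x2 - x2.sign = 0 := by omega
      rw [if_pos hone, hdown_def, this]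
      unfold lyap
      rw [if_pos rfl]
    · rw [if_neg hone, lyap_of_ne, hdown_def]
      · unfold onorm; simp [hdown]
      · simp only [hdown_def, Prod.mk.injEq, ne_eq]
        intro h
        rw [h.2] at hdown
        simp at hdown
        omega
  rw [hq_up, hq_down, hlyap_up, hlyap_down, hlyap_x]
  exact axis_bound hα hn _ rfl

lemma drift {α : ℝ} (hα : 0 ≤ α) {x : ℤ × ℤ} (hx : x ∈ axesKc)
    {Y : Finset (ℤ × ℤ)} (hY : ∀ y ∈ Y, y ∈ axesKc) :
    ∑ y ∈ Y, q α x y * lyap y ≤ 7 / 8 * lyap x := by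
  obtain ⟨x1, x2⟩ := x
  by_cases h1 : x1 = 0 <;> by_cases h2 : x2 = 0
  · -- origin
    subst h1; subst h2
    have key : ∑ y ∈ Y, q α (0,0) y * lyap y
        ≤ ∑ y ∈ ({((1:ℤ),(0:ℤ)), (-1,0), (0,1), (0,-1)} : Finset (ℤ × ℤ)), q α (0,0) y * lyap y := by
      apply sum_le_of_support
      · intro y hy hne
        have hq : q α (0,0) y = if adj (0,0) y then 1/4 else 0 := by
          unfold q; rw [if_neg (by simp), if_neg (by simp)]
        rw [hq]
        obtain ⟨y1, y2⟩ := y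
        rw [if_neg, zero_mul]
        intro hadj
        unfold adj at hadj
        simp only [sub_zero] at hadj
        apply hne
        simp only [Finset.mem_insert, Finset.mem_singleton, Prod.mk.injEq]
        omega
      · intro y _; exact mul_nonneg (q_nonneg hα _ _) (lyap_nonneg _)
    refine key.trans ?_
    have hl : ∀ y1 y2 : ℤ, (y1, y2) ≠ ((0:ℤ),(0:ℤ)) → onorm (y1, y2) = 1 → lyap (y1, y2) = 2 := by
      intro y1 y2 hne hn
      unfold lyap
      rw [if_neg hne, hn]; norm_num
    have hq4 : ∀ y : ℤ × ℤ, adj (0,0) y → q α (0,0) y = 1/4 := by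
      intro y hadj
      unfold q
      rw [if_neg (by simp), if_neg (by simp), if_pos hadj]
    rw [Finset.sum_insert (by norm_num), Finset.sum_insert (by norm_num),
        Finset.sum_insert (by norm_num), Finset.sum_singleton]
    rw [hq4 _ (by unfold adj; norm_num), hq4 _ (by unfold adj; norm_num),
        hq4 _ (by unfold adj; norm_num), hq4 _ (by unfold adj; norm_num)]
    rw [hl 1 0 (by simp) (by simp [onorm]), hl (-1) 0 (by simp) (by simp [onorm]),
        hl 0 1 (by simp) (by simp [onorm]), hl 0 (-1) (by simp) (by simp [onorm])]
    unfold lyap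
    norm_num
  · -- y-axis : x1 = 0, x2 ≠ 0
    subst h1
    exact drift_yaxis hα h2 hY
  · -- x-axis : x2 = 0, x1 ≠ 0
    subst h2
    exact drift_xaxis hα h1 hY
  · exact absurd hx (by simp [axesKc, h1, h2])

lemma key_sum {α : ℝ} (hα : 0 ≤ α) (m : ℕ) :
    ∀ (x : ℤ × ℤ), x ∈ axesKc → ∀ F : Finset (ℕ → ℤ × ℤ),
      (∀ p ∈ F, p 0 = x) →
      (∀ p ∈ F, ∀ k, 0 < k → k ≤ m → p k ∈ axesKc) →
      (∀ p ∈ F, ∀ i, m ≤ i → p i = p m) →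
      ∑ p ∈ F, ∏ i ∈ Finset.range m, q α (p i) (p (i + 1))
        ≤ lyap x * (7 / 8) ^ m := by
  induction m with
  | zero =>
    intro x hx F h1 _ h3
    have hsub : F ⊆ {fun _ => x} := by
      intro p hp
      rw [Finset.mem_singleton]
      funext i
      rw [h3 p hp i (Nat.zero_le i), h1 p hp]
    simp only [Finset.range_zero, Finset.prod_empty, pow_zero, mul_one]
    rw [Finset.sum_const, nsmul_eq_mul, mul_one]
    have hcard : F.card ≤ 1 := by
      have := Finset.card_le_card hsub
      simpa using this
    calc (F.card : ℝ) ≤ 1 := by exact_mod_cast hcard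
      _ ≤ lyap x := lyap_one_le x
  | succ m ih =>
    intro x hx F h1 h2 h3
    have step : ∀ p ∈ F, ∏ i ∈ Finset.range (m + 1), q α (p i) (p (i + 1))
        = q α x (p 1) * ∏ i ∈ Finset.range m, q α (p (i + 1)) (p (i + 1 + 1)) := by
      intro p hp
      rw [Finset.prod_range_succ', mul_comm, h1 p hp]
    rw [Finset.sum_congr rfl step]
    classical
    set g : (ℕ → ℤ × ℤ) → ℤ × ℤ := fun p => p 1 with hg
    rw [← Finset.sum_fiberwise_of_maps_to
      (fun p hp => Finset.mem_image_of_mem g hp)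
      (fun p => q α x (p 1) * ∏ i ∈ Finset.range m, q α (p (i + 1)) (p (i + 1 + 1)))]
    have himage_axes : ∀ y ∈ F.image g, y ∈ axesKc := by
      intro y hy
      obtain ⟨p, hp, rfl⟩ := Finset.mem_image.1 hy
      exact h2 p hp 1 one_pos (by omega)
    have inner : ∀ y ∈ F.image g,
        ∑ p ∈ F.filter (fun p => g p = y),
          (q α x (p 1) * ∏ i ∈ Finset.range m, q α (p (i + 1)) (p (i + 1 + 1)))
        ≤ q α x y * (lyap y * (7 / 8) ^ m) := by
      intro y hy
      have hcong : ∀ p ∈ F.filter (fun p => g p = y),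
          q α x (p 1) * ∏ i ∈ Finset.range m, q α (p (i + 1)) (p (i + 1 + 1))
          = q α x y * ∏ i ∈ Finset.range m, q α (p (i + 1)) (p (i + 1 + 1)) := by
        intro p hp
        have h' : p 1 = y := (Finset.mem_filter.1 hp).2
        rw [h']
      rw [Finset.sum_congr rfl hcong, ← Finset.mul_sum]
      refine mul_le_mul_of_nonneg_left ?_ (q_nonneg hα _ _)
      -- reindex by the shift map φ
      set φ : (ℕ → ℤ × ℤ) → (ℕ → ℤ × ℤ) := fun p i => p (i + 1) with hφ
      have hinj : ∀ p ∈ F.filter (fun p => g p = y), ∀ p' ∈ F.filter (fun p => g p = y),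
          φ p = φ p' → p = p' := by
        intro p hp p' hp' h
        funext i
        cases i with
        | zero => rw [h1 p (Finset.mem_filter.1 hp).1, h1 p' (Finset.mem_filter.1 hp').1]
        | succ i => exact congrFun h i
      have hreindex : ∑ p ∈ F.filter (fun p => g p = y),
          ∏ i ∈ Finset.range m, q α (p (i + 1)) (p (i + 1 + 1))
          = ∑ p' ∈ (F.filter (fun p => g p = y)).image φ,
              ∏ i ∈ Finset.range m, q α (p' i) (p' (i + 1)) := by
        rw [Finset.sum_image hinj]
      rw [hreindex]
      apply ih y (himage_axes y hy)
      · intro p' hp'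
        obtain ⟨p, hp, rfl⟩ := Finset.mem_image.1 hp'
        exact (Finset.mem_filter.1 hp).2
      · intro p' hp' k hk1 hk2
        obtain ⟨p, hp, rfl⟩ := Finset.mem_image.1 hp'
        exact h2 p (Finset.mem_filter.1 hp).1 (k + 1) (by omega) (by omega)
      · intro p' hp' i hi
        obtain ⟨p, hp, rfl⟩ := Finset.mem_image.1 hp'
        have hpF := (Finset.mem_filter.1 hp).1
        show p (i + 1) = p (m + 1)
        rw [h3 p hpF (i + 1) (by omega)]
    calc ∑ y ∈ F.image g, ∑ p ∈ F.filter (fun p => g p = y),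
          (q α x (p 1) * ∏ i ∈ Finset.range m, q α (p (i + 1)) (p (i + 1 + 1)))
        ≤ ∑ y ∈ F.image g, q α x y * (lyap y * (7 / 8) ^ m) :=
          Finset.sum_le_sum inner
      _ = (∑ y ∈ F.image g, q α x y * lyap y) * (7 / 8) ^ m := by
          rw [Finset.sum_mul]; congr 1; funext y; ring
      _ ≤ (7 / 8 * lyap x) * (7 / 8) ^ m := by
          refine mul_le_mul_of_nonneg_right ?_ (by positivity)
          exact drift hα hx himage_axes
      _ = lyap x * (7 / 8) ^ (m + 1) := by ring


lemma tail_bound {α : ℝ} (hα : 0 ≤ α) {Ω : Type*} [MeasurableSpace Ω]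
    (W : PerturbedWalk α Ω) (x : ℤ × ℤ) (hx : x ∈ axesKc) (m : ℕ) :
    (W.P x {ω | ∀ k, 0 < k → k ≤ m → W.X k ω ∈ axesKc}).toReal
      ≤ lyap x * (7 / 8) ^ m := by
  classical
  haveI := W.prob x
  set A : Set Ω := {ω | W.X 0 ω = x} with hA_def
  have hAm : MeasurableSet A := W.meas 0 (measurableSet_singleton x)
  have hA1 : W.P x A = 1 := by
    have e : {ω | ∀ i ≤ 0, W.X i ω = (fun _ => x) i} = A := by
      ext ω; simp [hA_def, Nat.le_zero]
    have hf := W.fdd x 0 (fun _ => x) rfl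
    rw [e] at hf
    simp only [Finset.range_zero, Finset.prod_empty] at hf
    rw [← ENNReal.ofReal_toReal (measure_ne_top (W.P x) A), hf]
    norm_num
  have hAc : W.P x Aᶜ = 0 := by
    rw [measure_compl hAm (measure_ne_top _ _), measure_univ, hA1, tsub_self]
  set E : Set Ω := {ω | ∀ k, 0 < k → k ≤ m → W.X k ω ∈ axesKc} with hE_def
  -- countable family of admissible paths
  set D : Set (ℕ → ℤ × ℤ) :=
    {p | p 0 = x ∧ (∀ k, 0 < k → k ≤ m → p k ∈ axesKc) ∧ ∀ i, m ≤ i → p i = p m}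
    with hD_def
  haveI hDcount : Countable ↥D := by
    have hinj : Function.Injective (fun p : ↥D => (fun i : Fin (m + 1) => p.1 i)) := ?_
    · exact hinj.countable
    intro p p' h
    apply Subtype.ext
    funext i
    by_cases hi : i ≤ m
    · have := congrFun h ⟨i, by omega⟩
      exact this
    · have h1 := p.2.2.2 i (by omega)
      have h2 := p'.2.2.2 i (by omega)
      rw [h1, h2]
      exact congrFun h ⟨m, by omega⟩
  set C : (ℕ → ℤ × ℤ) → Set Ω := fun p => {ω | ∀ i ≤ m, W.X i ω = p i} with hC_def
  have hcover : E ∩ A ⊆ ⋃ p : D, C p.1 := by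
    rintro ω ⟨hE', hA'⟩
    refine Set.mem_iUnion.2 ⟨⟨fun i => if i ≤ m then W.X i ω else W.X m ω, ?_, ?_, ?_⟩, ?_⟩
    · simp only [if_pos (Nat.zero_le m)]
      exact hA'
    · intro k hk1 hk2
      simp only [if_pos hk2]
      exact hE' k hk1 hk2
    · intro i hi
      simp only [if_pos (le_refl m)]
      by_cases h : i ≤ m
      · have : i = m := le_antisymm h hi
        simp [this]
      · simp [if_neg h]
    · intro i hi
      simp only [hC_def, if_pos hi]
  have hEbound : W.P x E ≤ ∑' p : D, W.P x (C p.1) := by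
    calc W.P x E ≤ W.P x ((E ∩ A) ∪ Aᶜ) := by
          apply measure_mono
          intro ω hω
          by_cases h : ω ∈ A
          · exact Or.inl ⟨hω, h⟩
          · exact Or.inr h
      _ ≤ W.P x (E ∩ A) + W.P x Aᶜ := measure_union_le _ _
      _ = W.P x (E ∩ A) := by rw [hAc, add_zero]
      _ ≤ W.P x (⋃ p : D, C p.1) := measure_mono hcover
      _ ≤ ∑' p : D, W.P x (C p.1) := measure_iUnion_le _
  have htsum : ∑' p : D, W.P x (C p.1) ≤ ENNReal.ofReal (lyap x * (7 / 8) ^ m) := by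
    rw [ENNReal.tsum_eq_iSup_sum]
    apply iSup_le
    intro Fs
    have hmeas_eq : ∀ p ∈ Fs, W.P x (C p.1)
        = ENNReal.ofReal (∏ i ∈ Finset.range m, q α (p.1 i) (p.1 (i + 1))) := by
      intro p _
      have hf := W.fdd x m p.1 p.2.1
      rw [← hf, ENNReal.ofReal_toReal (measure_ne_top _ _)]
    rw [Finset.sum_congr rfl hmeas_eq]
    have hwnn : ∀ p ∈ Fs, 0 ≤ ∏ i ∈ Finset.range m, q α (p.1 i) (p.1 (i + 1)) := by
      intro p _
      exact Finset.prod_nonneg fun i _ => q_nonneg hα _ _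
    rw [← ENNReal.ofReal_sum_of_nonneg hwnn]
    apply ENNReal.ofReal_le_ofReal
    have hmap : ∑ p ∈ Fs.map (Function.Embedding.subtype _),
        ∏ i ∈ Finset.range m, q α (p i) (p (i + 1))
        = ∑ p ∈ Fs, ∏ i ∈ Finset.range m, q α (p.1 i) (p.1 (i + 1)) := by
      rw [Finset.sum_map]
      rfl
    rw [← hmap]
    apply key_sum hα m x hx
    · intro p hp
      obtain ⟨p', _, rfl⟩ := Finset.mem_map.1 hp
      exact p'.2.1
    · intro p hp k hk1 hk2
      obtain ⟨p', _, rfl⟩ := Finset.mem_map.1 hp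
      exact p'.2.2.1 k hk1 hk2
    · intro p hp i hi
      obtain ⟨p', _, rfl⟩ := Finset.mem_map.1 hp
      exact p'.2.2.2 i hi
  have hfinal : W.P x E ≤ ENNReal.ofReal (lyap x * (7 / 8) ^ m) :=
    hEbound.trans htsum
  exact ENNReal.toReal_le_of_le_ofReal
    (mul_nonneg (lyap_nonneg x) (by positivity)) hfinal


/-- For `α > 1`, starting from `(0,a)` with `a > 0`, the exit time `ρ` from the axes has
tails decaying faster than any polynomial: for any `r > 0`, `P_{(0,a)}(ρ > m) ≤ m^{-r}`
for all large `m`. -/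
theorem exit_time_superpolynomial_tail (α : ℝ) (hα : 1 < α)
    {Ω : Type*} [MeasurableSpace Ω] (W : PerturbedWalk α Ω)
    (a : ℤ) (ha : 0 < a) (r : ℝ) (hr : 0 < r) :
    ∀ᶠ m : ℕ in atTop,
      (W.P (0, a) {ω | ∀ k, 0 < k → k ≤ m → W.X k ω ∈ axesKc}).toReal
        ≤ (m : ℝ) ^ (-r) := by
  have hα0 : (0:ℝ) ≤ α := by linarith
  have hax : ((0:ℤ), a) ∈ axesKc := Or.inl rfl
  set L := lyap (0, a) with hL
  have hL1 : 1 ≤ L := lyap_one_le _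
  have hL0 : 0 < L := lt_of_lt_of_le one_pos hL1
  set K := ⌈r⌉₊ with hK
  have habs : |(7/8 : ℝ)| < 1 := by rw [abs_of_pos (by norm_num)]; norm_num
  have htend := tendsto_pow_const_mul_const_pow_of_abs_lt_one K habs
  have hev : ∀ᶠ m : ℕ in atTop, (m:ℝ)^K * (7/8:ℝ)^m < 1/L :=
    htend.eventually_lt_const (by positivity)
  filter_upwards [hev, eventually_ge_atTop 1] with m hm hm1
  have hb := tail_bound hα0 W (0, a) hax m
  refine hb.trans ?_
  have hm1R : (1:ℝ) ≤ (m:ℝ) := by exact_mod_cast hm1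
  have hrK : (m:ℝ)^r ≤ (m:ℝ)^(K:ℕ) := by
    rw [← Real.rpow_natCast (m:ℝ) K]
    exact Real.rpow_le_rpow_of_exponent_le hm1R (Nat.le_ceil r)
  have hmr_pos : 0 < (m:ℝ)^r := Real.rpow_pos_of_pos (by linarith) r
  rw [Real.rpow_neg (by linarith : (0:ℝ) ≤ (m:ℝ)), ← one_div, le_div_iff₀ hmr_pos]
  calc L * (7/8:ℝ)^m * (m:ℝ)^r ≤ L * (7/8:ℝ)^m * (m:ℝ)^(K:ℕ) := by
        apply mul_le_mul_of_nonneg_left hrK (by positivity)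
    _ = L * ((m:ℝ)^(K:ℕ) * (7/8:ℝ)^m) := by ring
    _ ≤ L * (1/L) := mul_le_mul_of_nonneg_left hm.le (by positivity)
    _ = 1 := by field_simp

end
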